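/- Let 0 < a_1 ≤ a_2 ≤ ... ≤ a_n be integers, 1 < t ≤ n/2, and T ∈ H_t. Then Σ_{i ∈ [2t-1] \ T} a_i ≤ Σ_{i ∈ T \ {2t-1}} a_i < Σ_{i ∈ T} a_i. -/

import Mathlib

lemma filter_le_orderEmbOfFin (s : Finset ℕ) {m : ℕ} (h : s.card = m) (k : Fin m) :
    s.filter (· ≤ s.orderEmbOfFin h k) = (Finset.Iic k).image (s.orderEmbOfFin h) := by
  ext x
  simp only [Finset.mem_filter, Finset.mem_image, Finset.mem_Iic]
  constructor
  · rintro ⟨hxs, hxe⟩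
    have : x ∈ Set.range (s.orderEmbOfFin h) := by
      rw [Finset.range_orderEmbOfFin]; exact hxs
    obtain ⟨j, rfl⟩ := this
    exact ⟨j, (s.orderEmbOfFin h).le_iff_le.mp hxe, rfl⟩
  · rintro ⟨j, hj, rfl⟩
    exact ⟨Finset.orderEmbOfFin_mem s h j, (s.orderEmbOfFin h).le_iff_le.mpr hj⟩

lemma card_filter_le_orderEmbOfFin (s : Finset ℕ) {m : ℕ} (h : s.card = m) (k : Fin m) :
    (s.filter (· ≤ s.orderEmbOfFin h k)).card = (k : ℕ) + 1 := by
  rw [filter_le_orderEmbOfFin s h k,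
    Finset.card_image_of_injective _ (s.orderEmbOfFin h).injective, Fin.card_Iic]

lemma sum_orderEmbOfFin (s : Finset ℕ) {m : ℕ} (h : s.card = m) (a : ℕ → ℕ) :
    ∑ x ∈ s, a x = ∑ k : Fin m, a (s.orderEmbOfFin h k) := by
  have himg : Finset.image (s.orderEmbOfFin h) Finset.univ = s := by
    ext x
    simp only [Finset.mem_image, Finset.mem_univ, true_and]
    rw [← Set.mem_range, Finset.range_orderEmbOfFin]
    simp
  calc ∑ x ∈ s, a x = ∑ x ∈ Finset.image (s.orderEmbOfFin h) Finset.univ, a x := by rw [himg]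
    _ = ∑ k : Fin m, a (s.orderEmbOfFin h k) :=
        Finset.sum_image (fun i _ j _ hij => (s.orderEmbOfFin h).injective hij)

def Ht (n t : ℕ) (T : Finset ℕ) : Prop :=
  T ⊆ Finset.Icc 1 n ∧ T.card = t ∧
  (∀ s ∈ T, (T.filter (· ≤ s)).card < t → 2 * (T.filter (· ≤ s)).card ≤ s) ∧
  (∀ s ∈ T, (T.filter (· ≤ s)).card = t → s < 2 * t)

/-- for `0 < a₁ ≤ … ≤ a_n`, `1 < t ≤ n/2` and `T ∈ H_t`,
`Σ_{i ∈ [2t-1] \ T} a_i ≤ Σ_{i ∈ T \ {2t-1}} a_i < Σ_{i ∈ T} a_i`. -/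
theorem stmt3 (n t : ℕ) (a : ℕ → ℕ)
    (hpos : ∀ i ∈ Finset.Icc 1 n, 0 < a i)
    (hmono : ∀ i j, 1 ≤ i → i ≤ j → j ≤ n → a i ≤ a j)
    (ht : 1 < t) (htn : 2 * t ≤ n) (T : Finset ℕ) (hT : Ht n t T) :
    (∑ i ∈ Finset.Icc 1 (2 * t - 1) \ T, a i) ≤ (∑ i ∈ T.erase (2 * t - 1), a i) ∧
    (∑ i ∈ T.erase (2 * t - 1), a i) < ∑ i ∈ T, a i := by

  obtain ⟨hTsub, hTcard, hrank, hmax⟩ := hT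
  have ht0 : 0 < t := ht.trans_le le_rfl |>.trans_le le_rfl |> fun _ => Nat.lt_of_lt_of_le Nat.zero_lt_one ht.le
  have hTne : T.Nonempty := Finset.card_pos.mp (hTcard ▸ ht0)
  set M := T.max' hTne with hM
  have hMmem : M ∈ T := T.max'_mem hTne
  -- T.filter (· ≤ M) = T
  have hfilM : T.filter (· ≤ M) = T := by
    apply Finset.filter_true_of_mem
    intro x hx; exact Finset.le_max' T x hx
  have hMlt : M < 2 * t := hmax M hMmem (by rw [hfilM, hTcard])
  -- second largest
  have hTe : (T.erase M).Nonempty := by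
    rw [← Finset.card_pos, Finset.card_erase_of_mem hMmem, hTcard]
    omega
  set S := (T.erase M).max' hTe with hS
  have hSmem : S ∈ T.erase M := (T.erase M).max'_mem hTe
  have hSne : S ≠ M := Finset.ne_of_mem_erase hSmem
  have hSltM : S < M := lt_of_le_of_ne (Finset.le_max' T S (Finset.mem_of_mem_erase hSmem)) hSne
  have hfilS : T.filter (· ≤ S) = T.erase M := by
    ext x
    simp only [Finset.mem_filter, Finset.mem_erase]
    constructor
    · rintro ⟨hx, hxS⟩
      exact ⟨fun h => absurd (h ▸ hxS) (not_le.mpr hSltM), hx⟩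
    · rintro ⟨hxM, hx⟩
      refine ⟨hx, Finset.le_max' _ x (Finset.mem_erase.mpr ⟨hxM, hx⟩)⟩
  have hScard : (T.filter (· ≤ S)).card = t - 1 := by
    rw [hfilS, Finset.card_erase_of_mem hMmem, hTcard]
  have hSge : 2 * (t - 1) ≤ S := by
    have := hrank S (Finset.mem_of_mem_erase hSmem) (by rw [hScard]; omega)
    rwa [hScard] at this
  have hMeq : M = 2 * t - 1 := by omega
  -- T ⊆ Icc 1 (2t-1)
  have hTsub' : T ⊆ Finset.Icc 1 (2 * t - 1) := by
    intro x hx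
    have h1 : x ∈ Finset.Icc 1 n := hTsub hx
    rw [Finset.mem_Icc] at h1 ⊢
    exact ⟨h1.1, hMeq ▸ Finset.le_max' T x hx⟩
  set m := t - 1 with hm
  set C := Finset.Icc 1 (2 * t - 1) \ T with hCdef
  set T' := T.erase (2 * t - 1) with hT'def
  have hCcard : C.card = m := by
    rw [hCdef, Finset.card_sdiff_of_subset hTsub', Nat.card_Icc, hTcard]; omega
  have hT'card : T'.card = m := by
    rw [hT'def, Finset.card_erase_of_mem (hMeq ▸ hMmem), hTcard]
  -- domination
  have hdom : ∀ k : Fin m, C.orderEmbOfFin hCcard k ≤ T'.orderEmbOfFin hT'card k := by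
    intro k
    by_contra hcon
    push_neg at hcon
    set sk := T'.orderEmbOfFin hT'card k with hsk
    set ck := C.orderEmbOfFin hCcard k with hck
    have hskT' : sk ∈ T' := Finset.orderEmbOfFin_mem T' hT'card k
    have hskT : sk ∈ T := Finset.mem_of_mem_erase hskT'
    have hskne : sk ≠ 2 * t - 1 := Finset.ne_of_mem_erase hskT'
    have hskle : sk ≤ 2 * t - 1 := (Finset.mem_Icc.mp (hTsub' hskT)).2
    have hsklt : sk < 2 * t - 1 := lt_of_le_of_ne hskle hskne
    have hsk1 : 1 ≤ sk := (Finset.mem_Icc.mp (hTsub' hskT)).1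
    -- T'.filter (· ≤ sk) card = k+1, and equals T.filter (· ≤ sk)
    have hTfil : T.filter (· ≤ sk) = T'.filter (· ≤ sk) := by
      ext x
      simp only [Finset.mem_filter, hT'def, Finset.mem_erase]
      constructor
      · rintro ⟨hx, hxle⟩
        exact ⟨⟨fun h => absurd (h ▸ hxle) (not_le.mpr hsklt), hx⟩, hxle⟩
      · rintro ⟨⟨_, hx⟩, hxle⟩; exact ⟨hx, hxle⟩
    have hTrank : (T.filter (· ≤ sk)).card = (k : ℕ) + 1 := by
      rw [hTfil]; exact card_filter_le_orderEmbOfFin T' hT'card k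
    have hCfil : C.filter (· ≤ sk) ⊆ (Finset.Iio k).image (C.orderEmbOfFin hCcard) := by
      intro x hx
      rw [Finset.mem_filter] at hx
      have : x ∈ Set.range (C.orderEmbOfFin hCcard) := by
        rw [Finset.range_orderEmbOfFin]; exact hx.1
      obtain ⟨j, rfl⟩ := this
      rw [Finset.mem_image]
      refine ⟨j, Finset.mem_Iio.mpr ?_, rfl⟩
      have : C.orderEmbOfFin hCcard j < ck := lt_of_le_of_lt hx.2 hcon
      exact (C.orderEmbOfFin hCcard).lt_iff_lt.mp this
    have hCcount : (C.filter (· ≤ sk)).card ≤ (k : ℕ) := by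
      calc (C.filter (· ≤ sk)).card ≤ ((Finset.Iio k).image (C.orderEmbOfFin hCcard)).card :=
            Finset.card_le_card hCfil
        _ = (Finset.Iio k).card := Finset.card_image_of_injective _ (C.orderEmbOfFin hCcard).injective
        _ = (k : ℕ) := Fin.card_Iio k
    -- Icc 1 sk ⊆ T.filter ∪ C.filter
    have hcover : Finset.Icc 1 sk ⊆ T.filter (· ≤ sk) ∪ C.filter (· ≤ sk) := by
      intro x hx
      rw [Finset.mem_Icc] at hx
      have hxI : x ∈ Finset.Icc 1 (2 * t - 1) := Finset.mem_Icc.mpr ⟨hx.1, le_trans hx.2 hskle⟩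
      rw [Finset.mem_union, Finset.mem_filter, Finset.mem_filter]
      by_cases hxT : x ∈ T
      · exact Or.inl ⟨hxT, hx.2⟩
      · exact Or.inr ⟨Finset.mem_sdiff.mpr ⟨hxI, hxT⟩, hx.2⟩
    have hcount : sk ≤ 2 * (k : ℕ) + 1 := by
      have h1 : (Finset.Icc 1 sk).card ≤ (T.filter (· ≤ sk)).card + (C.filter (· ≤ sk)).card :=
        le_trans (Finset.card_le_card hcover) (Finset.card_union_le _ _)
      rw [Nat.card_Icc] at h1
      omega
    have hklt : (k : ℕ) + 1 < t := by
      have := k.isLt; omega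
    have := hrank sk hskT (by rw [hTrank]; exact hklt)
    rw [hTrank] at this
    omega
  -- bounds for monotonicity
  have hCmem : ∀ k : Fin m, 1 ≤ C.orderEmbOfFin hCcard k := by
    intro k
    have h1 : C.orderEmbOfFin hCcard k ∈ Finset.Icc 1 (2 * t - 1) \ T :=
      Finset.orderEmbOfFin_mem C hCcard k
    rw [Finset.mem_sdiff, Finset.mem_Icc] at h1
    exact h1.1.1
  have hT'mem : ∀ k : Fin m, T'.orderEmbOfFin hT'card k ≤ n := by
    intro k
    have h1 := Finset.mem_of_mem_erase (Finset.orderEmbOfFin_mem T' hT'card k)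
    exact (Finset.mem_Icc.mp (hTsub h1)).2
  constructor
  · rw [sum_orderEmbOfFin C hCcard a, sum_orderEmbOfFin T' hT'card a]
    apply Finset.sum_le_sum
    intro k _
    exact hmono _ _ (hCmem k) (hdom k) (hT'mem k)
  · apply Finset.sum_lt_sum_of_subset (Finset.erase_subset _ _) (hMeq ▸ hMmem)
      (Finset.notMem_erase _ _)
    · exact hpos _ (hTsub (hMeq ▸ hMmem))
    · intro j _ _; exact Nat.zero_le _
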